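/- Let A, B be n×n positive definite complex matrices (n ≥ 1), τ ∈ (0,1) and t ∈ (0,1) with t ≤ min{τ, 1-τ} or t ≥ max{τ, 1-τ}. Then det(A ∇ B)^{1/n} ≥ det(!_t(A,B))^{1/n} + (t(1-t)/(τ(1-τ)))·det(A ∇ B - !_τ(A,B))^{1/n}. -/

import Mathlib

open Matrix ComplexOrder

/-- The weighted matrix harmonic mean `A !_t B = ((1-t)A⁻¹ + tB⁻¹)⁻¹`. -/
noncomputable def mharm {n : ℕ} (t : ℝ) (A B : Matrix (Fin n) (Fin n) ℂ) :
    Matrix (Fin n) (Fin n) ℂ :=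
  (((1 - t : ℝ) : ℂ) • A⁻¹ + ((t : ℝ) : ℂ) • B⁻¹)⁻¹

/-- The harmonic Heinz matrix mean `!_t(A,B) = (A !_t B + A !_{1-t} B)/2`. -/
noncomputable def mheinz {n : ℕ} (t : ℝ) (A B : Matrix (Fin n) (Fin n) ℂ) :
    Matrix (Fin n) (Fin n) ℂ :=
  (2 : ℂ)⁻¹ • (mharm t A B + mharm (1 - t) A B)

/-- The matrix arithmetic mean `A ∇ B = (A + B)/2`. -/
noncomputable def marith {n : ℕ} (A B : Matrix (Fin n) (Fin n) ℂ) :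
    Matrix (Fin n) (Fin n) ℂ :=
  (2 : ℂ)⁻¹ • (A + B)

namespace Stmt18

/-! ### Scalar functions -/

noncomputable def harmf (s x : ℝ) : ℝ := ((1 - s) + s * x⁻¹)⁻¹
noncomputable def heinzf (s x : ℝ) : ℝ := (harmf s x + harmf (1 - s) x) / 2
noncomputable def arithf (x : ℝ) : ℝ := (1 + x) / 2

lemma harmf_base_pos {s x : ℝ} (hx : 0 < x) (h0 : 0 < s) (h1 : s < 1) :
    0 < (1 - s) + s * x⁻¹ := by
  have h2 : 0 < s * x⁻¹ := by positivity
  linarith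

lemma harmf_pos {s x : ℝ} (hx : 0 < x) (h0 : 0 < s) (h1 : s < 1) : 0 < harmf s x :=
  inv_pos.2 (harmf_base_pos hx h0 h1)

lemma heinzf_pos {s x : ℝ} (hx : 0 < x) (h0 : 0 < s) (h1 : s < 1) : 0 < heinzf s x := by
  have h2 := harmf_pos hx h0 h1
  have h3 := harmf_pos hx (by linarith : (0:ℝ) < 1 - s) (by linarith)
  unfold heinzf; linarith

lemma denom_pos {s x : ℝ} (hx : 0 < x) (h0 : 0 < s) (h1 : s < 1) :
    0 < s * (1 - s) * (x - 1) ^ 2 + x := by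
  have h2 : 0 ≤ s * (1 - s) * (x - 1) ^ 2 := by
    have : 0 < 1 - s := by linarith
    positivity
  linarith

lemma harmf_eq {s x : ℝ} (hx : 0 < x) :
    harmf s x = x / ((1 - s) * x + s) := by
  have hx0 : x ≠ 0 := hx.ne'
  have hb : (1 - s) + s * x⁻¹ = ((1 - s) * x + s) / x := by
    field_simp
  rw [harmf, hb, inv_div]

lemma heinz_eq {s x : ℝ} (hx : 0 < x) (h0 : 0 < s) (h1 : s < 1) :
    heinzf s x = x * (x + 1) / (2 * (s * (1 - s) * (x - 1) ^ 2 + x)) := by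
  have hb1 : (1 - s) * x + s ≠ 0 := by nlinarith
  have hb2 : (1 - (1 - s)) * x + (1 - s) ≠ 0 := by nlinarith
  rw [heinzf, harmf_eq hx, harmf_eq hx,
    div_add_div _ _ hb1 hb2, div_div]
  congr 1
  · ring
  · ring

lemma diff_eq {s x : ℝ} (hx : 0 < x) (h0 : 0 < s) (h1 : s < 1) :
    arithf x - heinzf s x
      = s * (1 - s) * (x - 1) ^ 2 * (1 + x) / (2 * (s * (1 - s) * (x - 1) ^ 2 + x)) := by
  have hd : s * (1 - s) * (x - 1) ^ 2 + x ≠ 0 := (denom_pos hx h0 h1).ne'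
  rw [heinz_eq hx h0 h1, arithf]
  field_simp
  ring

lemma diff_nonneg {s x : ℝ} (hx : 0 < x) (h0 : 0 < s) (h1 : s < 1) :
    0 ≤ arithf x - heinzf s x := by
  rw [diff_eq hx h0 h1]
  have h2 := denom_pos hx h0 h1
  have h3 : 0 < 1 - s := by linarith
  positivity

lemma arithf_pos {x : ℝ} (hx : 0 < x) : 0 < arithf x := by
  rw [arithf]; linarith

lemma scalar_main {t τ x : ℝ} (hx : 0 < x) (ht0 : 0 < t) (ht1 : t < 1)
    (hτ0 : 0 < τ) (hτ1 : τ < 1) (hpq : t * (1 - t) ≤ τ * (1 - τ)) :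
    heinzf t x + (t * (1 - t) / (τ * (1 - τ))) * (arithf x - heinzf τ x) ≤ arithf x := by
  have hq : 0 < τ * (1 - τ) := by nlinarith
  have hdt := denom_pos hx ht0 ht1
  have hdτ := denom_pos hx hτ0 hτ1
  have key : (t * (1 - t) / (τ * (1 - τ))) * (arithf x - heinzf τ x)
      ≤ arithf x - heinzf t x := by
    rw [diff_eq hx hτ0 hτ1, diff_eq hx ht0 ht1]
    have e1 : (t * (1 - t) / (τ * (1 - τ)))
        * (τ * (1 - τ) * (x - 1) ^ 2 * (1 + x) / (2 * (τ * (1 - τ) * (x - 1) ^ 2 + x)))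
        = t * (1 - t) * (x - 1) ^ 2 * (1 + x) / (2 * (τ * (1 - τ) * (x - 1) ^ 2 + x)) := by
      have h1τ : 1 - τ ≠ 0 := (sub_pos.2 hτ1).ne'
      field_simp
    rw [e1]
    have hnum : 0 ≤ t * (1 - t) * (x - 1) ^ 2 * (1 + x) := by
      have : 0 < 1 - t := by linarith
      positivity
    gcongr
  linarith

/-! ### Superadditivity of the geometric mean -/

lemma geom_superadd {n : ℕ} (hn : 1 ≤ n) (x y : Fin n → ℝ)
    (hx : ∀ i, 0 ≤ x i) (hy : ∀ i, 0 ≤ y i) :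
    (∏ i, x i) ^ ((1 : ℝ) / n) + (∏ i, y i) ^ ((1 : ℝ) / n)
      ≤ (∏ i, (x i + y i)) ^ ((1 : ℝ) / n) := by
  have hn0 : (n : ℝ) ≠ 0 := Nat.cast_ne_zero.2 (by omega)
  have hr0 : (0 : ℝ) < (1 : ℝ) / n := by positivity
  by_cases hz : ∀ i, 0 < x i + y i
  · have hP : (0 : ℝ) < ∏ i, (x i + y i) := Finset.prod_pos fun i _ => hz i
    have key : ∀ u : Fin n → ℝ, (∀ i, 0 ≤ u i) →
        (∏ i, u i) ^ ((1 : ℝ) / n)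
          ≤ (∏ i, (x i + y i)) ^ ((1 : ℝ) / n) * ∑ i, (1 : ℝ) / n * (u i / (x i + y i)) := by
      intro u hu
      have h1 : (∏ i, u i) = (∏ i, (x i + y i)) * ∏ i, (u i / (x i + y i)) := by
        rw [← Finset.prod_mul_distrib]
        exact Finset.prod_congr rfl fun i _ => (mul_div_cancel₀ _ (hz i).ne').symm
      have hq : ∀ i ∈ Finset.univ, (0:ℝ) ≤ u i / (x i + y i) :=
        fun i _ => div_nonneg (hu i) (hz i).le
      rw [h1, Real.mul_rpow hP.le (Finset.prod_nonneg hq),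
        ← Real.finset_prod_rpow _ _ hq _]
      refine mul_le_mul_of_nonneg_left ?_ (Real.rpow_nonneg hP.le _)
      have := Real.geom_mean_le_arith_mean_weighted Finset.univ
        (fun _ => (1 : ℝ) / n) (fun i => u i / (x i + y i))
        (fun i _ => by positivity)
        (by simp [Finset.sum_const, Finset.card_univ]; field_simp) hq
      simpa using this
    have h2 := key x hx
    have h3 := key y hy
    have h4 : (∏ i, (x i + y i)) ^ ((1 : ℝ) / n) * ∑ i, (1 : ℝ) / n * (x i / (x i + y i))
        + (∏ i, (x i + y i)) ^ ((1 : ℝ) / n) * ∑ i, (1 : ℝ) / n * (y i / (x i + y i))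
        = (∏ i, (x i + y i)) ^ ((1 : ℝ) / n) := by
      rw [← mul_add, ← Finset.sum_add_distrib]
      have : ∑ i, ((1 : ℝ) / n * (x i / (x i + y i)) + (1 : ℝ) / n * (y i / (x i + y i)))
          = ∑ i : Fin n, (1 : ℝ) / n := by
        refine Finset.sum_congr rfl fun i _ => ?_
        rw [← mul_add, ← add_div, div_self (hz i).ne', mul_one]
      rw [this]
      simp [Finset.sum_const, Finset.card_univ]
      field_simp
    linarith
  · push_neg at hz
    obtain ⟨i, hi⟩ := hz
    have hx0 : x i = 0 := le_antisymm (by linarith [hy i]) (hx i)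
    have hy0 : y i = 0 := le_antisymm (by linarith [hx i]) (hy i)
    rw [Finset.prod_eq_zero (Finset.mem_univ i) hx0,
      Finset.prod_eq_zero (Finset.mem_univ i) hy0,
      Finset.prod_eq_zero (Finset.mem_univ i) (by rw [hx0, hy0]; ring),
      Real.zero_rpow hr0.ne']
    simp

/-! ### Matrix lemmas -/

lemma posDef_conj {n : ℕ} {B P : Matrix (Fin n) (Fin n) ℂ} (hB : B.PosDef)
    (hP : IsUnit P.det) : (Pᴴ * B * P).PosDef := by
  refine Matrix.PosDef.of_dotProduct_mulVec_pos (isHermitian_conjTranspose_mul_mul _ hB.1) fun x hx => ?_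
  have h1 : P *ᵥ x ≠ 0 := by
    intro hc
    apply hx
    have := congrArg (fun v => P⁻¹ *ᵥ v) hc
    simpa [Matrix.mulVec_mulVec, Matrix.nonsing_inv_mul _ hP] using this
  simpa only [star_mulVec, dotProduct_mulVec, vecMul_vecMul] using hB.dotProduct_mulVec_pos h1

lemma diag_inv {n : ℕ} (v : Fin n → ℂ) (hv : ∀ i, v i ≠ 0) :
    (diagonal v)⁻¹ = diagonal fun i => (v i)⁻¹ := by
  rw [Matrix.inv_eq_right_inv]
  rw [diagonal_mul_diagonal]
  rw [show (fun i => v i * (v i)⁻¹) = fun _ : Fin n => (1 : ℂ) from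
    funext fun i => mul_inv_cancel₀ (hv i)]
  exact diagonal_one

lemma conj_smul_add {n : ℕ} (X Y D1 D2 : Matrix (Fin n) (Fin n) ℂ) (c1 c2 : ℂ) :
    c1 • (X * D1 * Y) + c2 • (X * D2 * Y) = X * (c1 • D1 + c2 • D2) * Y := by
  rw [mul_add, add_mul, mul_smul_comm, mul_smul_comm, smul_mul_assoc, smul_mul_assoc]

lemma conj_sub {n : ℕ} (X Y D1 D2 : Matrix (Fin n) (Fin n) ℂ) :
    X * D1 * Y - X * D2 * Y = X * (D1 - D2) * Y := by
  rw [mul_sub, sub_mul]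

lemma det_re_conj {n : ℕ} (W : Matrix (Fin n) (Fin n) ℂ) (f : Fin n → ℝ) :
    (W * diagonal (fun i => ((f i : ℝ) : ℂ)) * Wᴴ).det.re
      = Complex.normSq W.det * ∏ i, f i := by
  rw [det_mul, det_mul, det_conjTranspose, det_diagonal]
  have h : (∏ i, ((f i : ℝ) : ℂ)) = (((∏ i, f i : ℝ)) : ℂ) := by push_cast; rfl
  rw [h]
  have h2 : W.det * (((∏ i, f i : ℝ)) : ℂ) * star W.det
      = (((Complex.normSq W.det * ∏ i, f i : ℝ)) : ℂ) := by
    rw [mul_comm W.det, mul_assoc]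
    rw [show (star W.det : ℂ) = (starRingEnd ℂ) W.det from rfl, Complex.mul_conj]
    push_cast
    ring
  rw [h2, Complex.ofReal_re]

/-! ### The key lemma -/

lemma key {n : ℕ} (hn : 1 ≤ n) (W : Matrix (Fin n) (Fin n) ℂ) (hW : IsUnit W.det)
    (e : Fin n → ℝ) (he : ∀ i, 0 < e i) {τ t : ℝ}
    (hτ0 : 0 < τ) (hτ1 : τ < 1) (ht0 : 0 < t) (ht1 : t < 1)
    (hpq : t * (1 - t) ≤ τ * (1 - τ)) :
    (mheinz t (W * Wᴴ) (W * diagonal (fun i => ((e i : ℝ) : ℂ)) * Wᴴ)).det.re ^ ((1 : ℝ) / n)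
      + (t * (1 - t) / (τ * (1 - τ)))
        * (marith (W * Wᴴ) (W * diagonal (fun i => ((e i : ℝ) : ℂ)) * Wᴴ)
            - mheinz τ (W * Wᴴ) (W * diagonal (fun i => ((e i : ℝ) : ℂ)) * Wᴴ)).det.re
            ^ ((1 : ℝ) / n)
      ≤ (marith (W * Wᴴ) (W * diagonal (fun i => ((e i : ℝ) : ℂ)) * Wᴴ)).det.re
          ^ ((1 : ℝ) / n) := by
  have hWH : IsUnit Wᴴ.det := by
    rw [det_conjTranspose]; exact hW.star
  have hvne : ∀ i, ((e i : ℝ) : ℂ) ≠ 0 := fun i => by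
    exact_mod_cast Complex.ofReal_ne_zero.2 (he i).ne'
  have hconj_inv : ∀ v : Fin n → ℂ, (∀ i, v i ≠ 0) →
      (W * diagonal v * Wᴴ)⁻¹ = Wᴴ⁻¹ * diagonal (fun i => (v i)⁻¹) * W⁻¹ := by
    intro v hv
    rw [Matrix.mul_inv_rev, Matrix.mul_inv_rev, diag_inv v hv]
    exact (mul_assoc _ _ _).symm
  have hAinv : (W * Wᴴ)⁻¹ = Wᴴ⁻¹ * diagonal (fun _ : Fin n => (1 : ℂ)) * W⁻¹ := by
    rw [Matrix.mul_inv_rev, show diagonal (fun _ : Fin n => (1 : ℂ)) = 1 from diagonal_one,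
      mul_one]
  have hsum : ∀ s : ℝ,
      ((1 - s : ℝ) : ℂ) • (W * Wᴴ)⁻¹
          + ((s : ℝ) : ℂ) • (W * diagonal (fun i => ((e i : ℝ) : ℂ)) * Wᴴ)⁻¹
        = Wᴴ⁻¹ * diagonal (fun i => (((1 - s) + s * (e i)⁻¹ : ℝ) : ℂ)) * W⁻¹ := by
    intro s
    rw [hAinv, hconj_inv _ hvne, conj_smul_add]
    congr 2
    rw [← diagonal_smul, ← diagonal_smul, diagonal_add]
    congr 1
    funext i
    simp only [Pi.add_apply, Pi.smul_apply, smul_eq_mul]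
    push_cast
    ring
  have hmharm : ∀ s : ℝ, 0 < s → s < 1 →
      mharm s (W * Wᴴ) (W * diagonal (fun i => ((e i : ℝ) : ℂ)) * Wᴴ)
        = W * diagonal (fun i => ((harmf s (e i) : ℝ) : ℂ)) * Wᴴ := by
    intro s h0 h1
    have hne : ∀ i, (((1 - s) + s * (e i)⁻¹ : ℝ) : ℂ) ≠ 0 :=
      fun i => Complex.ofReal_ne_zero.2 (harmf_base_pos (he i) h0 h1).ne'
    rw [mharm, hsum s, Matrix.mul_inv_rev, Matrix.mul_inv_rev,
      Matrix.nonsing_inv_nonsing_inv _ hW, Matrix.nonsing_inv_nonsing_inv _ hWH,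
      diag_inv _ hne]
    rw [show (fun i => ((((1 - s) + s * (e i)⁻¹ : ℝ) : ℂ))⁻¹)
        = fun i => ((harmf s (e i) : ℝ) : ℂ) from funext fun i => by
      rw [harmf]; push_cast; ring]
    exact (mul_assoc _ _ _).symm
  have hheinz : ∀ s : ℝ, 0 < s → s < 1 →
      mheinz s (W * Wᴴ) (W * diagonal (fun i => ((e i : ℝ) : ℂ)) * Wᴴ)
        = W * diagonal (fun i => ((heinzf s (e i) : ℝ) : ℂ)) * Wᴴ := by
    intro s h0 h1
    rw [mheinz, hmharm s h0 h1, hmharm (1 - s) (by linarith) (by linarith), smul_add,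
      conj_smul_add]
    have hmid : (2 : ℂ)⁻¹ • diagonal (fun i => ((harmf s (e i) : ℝ) : ℂ))
        + (2 : ℂ)⁻¹ • diagonal (fun i => ((harmf (1 - s) (e i) : ℝ) : ℂ))
        = diagonal (fun i => ((heinzf s (e i) : ℝ) : ℂ)) := by
      rw [← diagonal_smul, ← diagonal_smul, diagonal_add]
      refine congrArg diagonal (funext fun i => ?_)
      simp only [Pi.add_apply, Pi.smul_apply, smul_eq_mul, heinzf]
      push_cast
      ring
    rw [hmid]
  have hA1 : W * Wᴴ = W * diagonal (fun _ : Fin n => (1 : ℂ)) * Wᴴ := by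
    rw [show diagonal (fun _ : Fin n => (1 : ℂ)) = 1 from diagonal_one, mul_one]
  have harith : marith (W * Wᴴ) (W * diagonal (fun i => ((e i : ℝ) : ℂ)) * Wᴴ)
      = W * diagonal (fun i => ((arithf (e i) : ℝ) : ℂ)) * Wᴴ := by
    rw [marith]
    nth_rewrite 1 [hA1]
    rw [smul_add, conj_smul_add]
    have hmid : (2 : ℂ)⁻¹ • diagonal (fun _ : Fin n => (1 : ℂ))
        + (2 : ℂ)⁻¹ • diagonal (fun i => ((e i : ℝ) : ℂ))
        = diagonal (fun i => ((arithf (e i) : ℝ) : ℂ)) := by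
      rw [← diagonal_smul, ← diagonal_smul, diagonal_add]
      refine congrArg diagonal (funext fun i => ?_)
      simp only [Pi.add_apply, Pi.smul_apply, smul_eq_mul, arithf]
      push_cast
      ring
    rw [hmid]
  have hdiff : marith (W * Wᴴ) (W * diagonal (fun i => ((e i : ℝ) : ℂ)) * Wᴴ)
        - mheinz τ (W * Wᴴ) (W * diagonal (fun i => ((e i : ℝ) : ℂ)) * Wᴴ)
      = W * diagonal (fun i => ((arithf (e i) - heinzf τ (e i) : ℝ) : ℂ)) * Wᴴ := by
    rw [harith, hheinz τ hτ0 hτ1, conj_sub]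
    have hmid : diagonal (fun i => ((arithf (e i) : ℝ) : ℂ))
        - diagonal (fun i => ((heinzf τ (e i) : ℝ) : ℂ))
        = diagonal (fun i => ((arithf (e i) - heinzf τ (e i) : ℝ) : ℂ)) := by
      rw [diagonal_sub]
      refine congrArg diagonal (funext fun i => ?_)
      push_cast
      ring
    rw [hmid]
  rw [hheinz t ht0 ht1, hdiff, harith,
    det_re_conj W (fun i => heinzf t (e i)),
    det_re_conj W (fun i => arithf (e i) - heinzf τ (e i)),
    det_re_conj W (fun i => arithf (e i))]
  -- now a purely real inequality
  set k : ℝ := Complex.normSq W.det with hk_def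
  set r : ℝ := (1 : ℝ) / n with hr_def
  set c : ℝ := t * (1 - t) / (τ * (1 - τ)) with hc_def
  have hn0 : n ≠ 0 := by omega
  have hk : 0 ≤ k := Complex.normSq_nonneg _
  have hq : 0 < τ * (1 - τ) := by nlinarith
  have hc : 0 ≤ c := by
    have hp : 0 ≤ t * (1 - t) := by nlinarith
    exact div_nonneg hp hq.le
  have hxnn : ∀ i, 0 ≤ heinzf t (e i) := fun i => (heinzf_pos (he i) ht0 ht1).le
  have hwnn : ∀ i, 0 ≤ arithf (e i) - heinzf τ (e i) :=
    fun i => diff_nonneg (he i) hτ0 hτ1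
  have hznn : ∀ i, 0 ≤ arithf (e i) := fun i => (arithf_pos (he i)).le
  have hP1 : 0 ≤ ∏ i, heinzf t (e i) := Finset.prod_nonneg fun i _ => hxnn i
  have hP2 : 0 ≤ ∏ i, (arithf (e i) - heinzf τ (e i)) :=
    Finset.prod_nonneg fun i _ => hwnn i
  have hP3 : 0 ≤ ∏ i, arithf (e i) := Finset.prod_nonneg fun i _ => hznn i
  rw [Real.mul_rpow hk hP1, Real.mul_rpow hk hP2, Real.mul_rpow hk hP3]
  have hcw : c * (∏ i, (arithf (e i) - heinzf τ (e i))) ^ r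
      = (∏ i, c * (arithf (e i) - heinzf τ (e i))) ^ r := by
    rw [show (∏ i, c * (arithf (e i) - heinzf τ (e i)))
        = c ^ n * ∏ i, (arithf (e i) - heinzf τ (e i)) by
      rw [Finset.prod_mul_distrib, Finset.prod_const, Finset.card_univ, Fintype.card_fin]]
    rw [Real.mul_rpow (pow_nonneg hc n) hP2]
    congr 1
    rw [hr_def, one_div, Real.pow_rpow_inv_natCast hc hn0]
  have core : (∏ i, heinzf t (e i)) ^ r
      + c * (∏ i, (arithf (e i) - heinzf τ (e i))) ^ r
      ≤ (∏ i, arithf (e i)) ^ r := by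
    rw [hcw]
    calc (∏ i, heinzf t (e i)) ^ r + (∏ i, c * (arithf (e i) - heinzf τ (e i))) ^ r
        ≤ (∏ i, (heinzf t (e i) + c * (arithf (e i) - heinzf τ (e i)))) ^ r :=
          geom_superadd hn _ _ hxnn (fun i => mul_nonneg hc (hwnn i))
      _ ≤ (∏ i, arithf (e i)) ^ r := by
          apply Real.rpow_le_rpow
          · exact Finset.prod_nonneg fun i _ =>
              add_nonneg (hxnn i) (mul_nonneg hc (hwnn i))
          · exact Finset.prod_le_prod
              (fun i _ => add_nonneg (hxnn i) (mul_nonneg hc (hwnn i)))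
              (fun i _ => scalar_main (he i) ht0 ht1 hτ0 hτ1 hpq)
          · positivity
  calc k ^ r * (∏ i, heinzf t (e i)) ^ r
        + c * (k ^ r * (∏ i, (arithf (e i) - heinzf τ (e i))) ^ r)
      = k ^ r * ((∏ i, heinzf t (e i)) ^ r
          + c * (∏ i, (arithf (e i) - heinzf τ (e i))) ^ r) := by ring
    _ ≤ k ^ r * (∏ i, arithf (e i)) ^ r :=
        mul_le_mul_of_nonneg_left core (Real.rpow_nonneg hk _)

end Stmt18

theorem stmt_18 {n : ℕ} (hn : 1 ≤ n) (A B : Matrix (Fin n) (Fin n) ℂ)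
    (hA : A.PosDef) (hB : B.PosDef) (τ t : ℝ)
    (hτ : τ ∈ Set.Ioo (0 : ℝ) 1) (ht : t ∈ Set.Ioo (0 : ℝ) 1)
    (h : t ≤ min τ (1 - τ) ∨ t ≥ max τ (1 - τ)) :
    (mheinz t A B).det.re ^ ((1 : ℝ) / n)
      + (t * (1 - t) / (τ * (1 - τ))) * (marith A B - mheinz τ A B).det.re ^ ((1 : ℝ) / n)
      ≤ (marith A B).det.re ^ ((1 : ℝ) / n) := by
  obtain ⟨hτ0, hτ1⟩ := hτ
  obtain ⟨ht0, ht1⟩ := ht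
  have hpq : t * (1 - t) ≤ τ * (1 - τ) := by
    rcases h with h | h
    · obtain ⟨h1, h2⟩ := le_min_iff.mp h
      nlinarith
    · obtain ⟨h1, h2⟩ := max_le_iff.mp h
      nlinarith
  -- simultaneous diagonalization
  obtain ⟨S, hS, hSS⟩ : ∃ S : Matrix (Fin n) (Fin n) ℂ, S.PosSemidef ∧ S * S = A := by
    open scoped MatrixOrder in
    exact ⟨CFC.sqrt A, (CFC.sqrt_nonneg A).posSemidef,
      CFC.sqrt_mul_sqrt_self A hA.posSemidef.nonneg⟩
  have hSH : Sᴴ = S := hS.1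
  have hSdet : IsUnit S.det := by
    rw [isUnit_iff_ne_zero]
    intro h0
    have : A.det = 0 := by rw [← hSS, det_mul, h0, mul_zero]
    exact hA.det_pos.ne' this
  have hSinvH : (S⁻¹)ᴴ = S⁻¹ := by
    rw [Matrix.conjTranspose_nonsing_inv, hSH]
  have hSinvdet : IsUnit (S⁻¹).det := by
    have h1 : S⁻¹ * S = 1 := Matrix.nonsing_inv_mul _ hSdet
    have h2 : (S⁻¹).det * S.det = 1 := by rw [← det_mul, h1, det_one]
    exact isUnit_iff_exists_inv.mpr ⟨_, h2⟩
  set Z := S⁻¹ * B * S⁻¹ with hZ_def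
  have hZ : Z.PosDef := by
    have h0 := Stmt18.posDef_conj hB hSinvdet
    rwa [hSinvH] at h0
  set U : Matrix (Fin n) (Fin n) ℂ := (IsHermitian.eigenvectorUnitary hZ.1 : Matrix (Fin n) (Fin n) ℂ)
    with hU_def
  set e : Fin n → ℝ := hZ.1.eigenvalues with he_def
  have he : ∀ i, 0 < e i := fun i => hZ.eigenvalues_pos i
  have hUU : U * Uᴴ = 1 := by
    rw [← star_eq_conjTranspose]
    exact mem_unitaryGroup_iff.mp (IsHermitian.eigenvectorUnitary hZ.1).2
  have hUdet : IsUnit U.det := by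
    have h2 : U.det * (Uᴴ).det = 1 := by rw [← det_mul, hUU, det_one]
    exact isUnit_iff_exists_inv.mpr ⟨_, h2⟩
  set W := S * U with hW_def
  have hWdet : IsUnit W.det := by
    rw [hW_def, det_mul]
    exact hSdet.mul hUdet
  have hspec : Z = U * diagonal (fun i => ((e i : ℝ) : ℂ)) * Uᴴ := by
    have h0 := hZ.1.spectral_theorem
    rw [Unitary.conjStarAlgAut_apply] at h0
    rw [← star_eq_conjTranspose] at *
    exact h0
  have hAeq : A = W * Wᴴ := by
    rw [hW_def, conjTranspose_mul, hSH, mul_assoc, ← mul_assoc U, hUU, one_mul, hSS]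
  have hBeq : B = W * diagonal (fun i => ((e i : ℝ) : ℂ)) * Wᴴ := by
    have hZB : S * Z * S = B := by
      rw [hZ_def, show S * (S⁻¹ * B * S⁻¹) * S = (S * S⁻¹) * B * (S⁻¹ * S) by
        simp only [mul_assoc], Matrix.mul_nonsing_inv _ hSdet,
        Matrix.nonsing_inv_mul _ hSdet, one_mul, mul_one]
    rw [← hZB, hspec, hW_def, conjTranspose_mul, hSH]
    simp only [mul_assoc]
  rw [hAeq, hBeq]
  exact Stmt18.key hn W hWdet e he hτ0 hτ1 ht0 ht1 hpq
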